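/- (Retraction onto a finite union of coordinate subspaces, affine content of the paper's Proposition 2.11 and Corollary 2.12.) Let K be a field equipped with a valuation v : K → Γ₀, where Γ₀ is a linearly ordered commutative group with zero, and give K^n = (Fin n → K) the product of the valuation topologies. Let α₁, …, α_k be finitely many subsets of Fin n and let C = ⋃_{j=1}^{k} {x ∈ K^n : ∀ i ∈ α_j, x_i = 0} (a union of coordinate subspaces, i.e. an snc subvariety in coordinates). If C is nonempty, then there exists a continuous map ω : K^n → K^n with range contained in C and ω(x) = x for all x ∈ C; that is, C is a retract of K^n. -/

import Mathlib

open Finset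
open scoped Classical

/-- The max of the valuations of the coordinates of `x` in `A` (0 if none). -/
noncomputable def mvalCS {K : Type*} [Field K] {Γ₀ : Type*} [LinearOrderedCommGroupWithZero Γ₀]
    [Valued K Γ₀] {n : ℕ} (A : Set (Fin n)) (x : Fin n → K) : Γ₀ :=
  (insert (0:Γ₀) ((Finset.univ.filter (· ∈ A)).image fun i => Valued.v (x i))).max'
    ⟨0, mem_insert_self _ _⟩

section lemmas
variable {K : Type*} [Field K] {Γ₀ : Type*} [LinearOrderedCommGroupWithZero Γ₀]
    [Valued K Γ₀] {n : ℕ} {A : Set (Fin n)} {x y : Fin n → K}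

theorem le_mvalCS {i : Fin n} (hi : i ∈ A) : Valued.v (x i) ≤ mvalCS A x := by
  unfold mvalCS
  exact Finset.le_max' _ _ (mem_insert_of_mem (mem_image_of_mem (fun i => Valued.v (x i)) (mem_filter.2 ⟨mem_univ _, hi⟩)))

theorem mvalCS_le {c : Γ₀} (h : ∀ i ∈ A, Valued.v (x i) ≤ c) : mvalCS A x ≤ c := by
  unfold mvalCS
  refine Finset.max'_le _ _ _ ?_
  intro b hb
  rcases mem_insert.1 hb with rfl | hb
  · exact zero_le'
  · rcases mem_image.1 hb with ⟨i, hi, rfl⟩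
    exact h i (by simpa using hi)

theorem mvalCS_achieve : mvalCS A x = 0 ∨ ∃ i ∈ A, Valued.v (x i) = mvalCS A x := by
  unfold mvalCS
  have := Finset.max'_mem (insert (0:Γ₀) ((Finset.univ.filter (· ∈ A)).image fun i => Valued.v (x i))) ⟨0, mem_insert_self _ _⟩
  rcases mem_insert.1 this with h | h
  · exact Or.inl h
  · rcases mem_image.1 h with ⟨i, hi, hv⟩
    exact Or.inr ⟨i, by simpa using hi, hv⟩

theorem mvalCS_eq_zero_iff : mvalCS A x = 0 ↔ ∀ i ∈ A, x i = 0 := by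
  constructor
  · intro h i hi
    have := le_mvalCS (x := x) hi
    rw [h, le_zero_iff] at this
    simpa using this
  · intro h
    have : mvalCS A x ≤ 0 := mvalCS_le fun i hi => by simp [h i hi]
    exact le_zero_iff.1 this

/-- Key stability: if `y` is `γ`-close to `x` with `γ` below all nonzero coordinate values. -/
theorem mvalCS_stable (γ : Γ₀ˣ) (hγ : ∀ i, x i ≠ 0 → (γ:Γ₀) ≤ Valued.v (x i))
    (hy : ∀ i, Valued.v (y i - x i) < γ) :
    (mvalCS A x = 0 ∧ mvalCS A y < γ) ∨ mvalCS A y = mvalCS A x := by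
  have hvy : ∀ i, x i ≠ 0 → Valued.v (y i) = Valued.v (x i) := by
    intro i hix
    have h1 : Valued.v (y i - x i) < Valued.v (x i) := lt_of_lt_of_le (hy i) (hγ i hix)
    have : y i = (y i - x i) + x i := by ring
    rw [this, Valuation.map_add_eq_of_lt_right _ h1]
  have hvy0 : ∀ i, x i = 0 → Valued.v (y i) < γ := by
    intro i hix
    have := hy i
    rwa [hix, sub_zero] at this
  by_cases h0 : mvalCS A x = 0
  · left
    refine ⟨h0, ?_⟩
    have hall : ∀ i ∈ A, x i = 0 := mvalCS_eq_zero_iff.1 h0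
    rcases mvalCS_achieve (A := A) (x := y) with h | ⟨i, hi, hv⟩
    · rw [h]; exact Units.zero_lt γ
    · rw [← hv]; exact hvy0 i (hall i hi)
  · right
    apply le_antisymm
    · refine mvalCS_le fun i hi => ?_
      by_cases hix : x i = 0
      · calc Valued.v (y i) ≤ (γ:Γ₀) := le_of_lt (hvy0 i hix)
          _ ≤ mvalCS A x := ?_
        rcases mvalCS_achieve (A := A) (x := x) with h | ⟨l, hl, hv⟩
        · exact absurd h h0
        · rw [← hv]
          refine hγ l fun hxl => ?_
          rw [hxl] at hv; simp at hv; exact h0 hv.symm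
      · rw [hvy i hix]; exact le_mvalCS hi
    · rcases mvalCS_achieve (A := A) (x := x) with h | ⟨l, hl, hv⟩
      · exact absurd h h0
      · have hxl : x l ≠ 0 := fun hxl => by rw [hxl] at hv; simp at hv; exact h0 hv.symm
        rw [← hv, ← hvy l hxl]
        exact le_mvalCS hl
end lemmas

/-- Select the least index minimizing `mvalCS (α j) x`. -/
noncomputable def JselCS {K : Type*} [Field K] {Γ₀ : Type*} [LinearOrderedCommGroupWithZero Γ₀]
    [Valued K Γ₀] {n k : ℕ} [NeZero k] (α : Fin k → Set (Fin n)) (x : Fin n → K) : Fin k :=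
  (Finset.univ.filter fun j => ∀ j', mvalCS (α j) x ≤ mvalCS (α j') x).min'
    (by
      obtain ⟨j, -, hj⟩ := Finset.exists_min_image Finset.univ (fun j => mvalCS (α j) x)
        (univ_nonempty)
      exact ⟨j, by simp only [mem_filter, mem_univ, true_and]; exact fun j' => hj j' (mem_univ _)⟩)

section jsel
variable {K : Type*} [Field K] {Γ₀ : Type*} [LinearOrderedCommGroupWithZero Γ₀]
    [Valued K Γ₀] {n k : ℕ} [NeZero k] {α : Fin k → Set (Fin n)} {x y : Fin n → K}

theorem JselCS_min : ∀ j, mvalCS (α (JselCS α x)) x ≤ mvalCS (α j) x := by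
  classical
  have := Finset.min'_mem (Finset.univ.filter fun j => ∀ j', mvalCS (α j) x ≤ mvalCS (α j') x)
    (by
      obtain ⟨j, -, hj⟩ := Finset.exists_min_image Finset.univ (fun j => mvalCS (α j) x)
        (univ_nonempty)
      exact ⟨j, by simp only [mem_filter, mem_univ, true_and]; exact fun j' => hj j' (mem_univ _)⟩)
  simpa only [JselCS, mem_filter, mem_univ, true_and] using this

theorem JselCS_congr (h : ∀ j, mvalCS (α j) y = mvalCS (α j) x) : JselCS α y = JselCS α x := by
  have hset : (Finset.univ.filter fun j => ∀ j', mvalCS (α j) y ≤ mvalCS (α j') y)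
      = (Finset.univ.filter fun j => ∀ j', mvalCS (α j) x ≤ mvalCS (α j') x) := by
    ext j; simp [h]
  have haux : ∀ (s t : Finset (Fin k)) (hs : s.Nonempty) (ht : t.Nonempty),
      s = t → s.min' hs = t.min' ht := by rintro s t hs ht rfl; rfl
  unfold JselCS
  exact haux _ _ _ _ hset

/-- Dichotomy: either the selected index is the same, or both selections have value 0 at `x`. -/
theorem JselCS_dichotomy (γ : Γ₀ˣ) (hγ : ∀ i, x i ≠ 0 → (γ:Γ₀) ≤ Valued.v (x i))
    (hy : ∀ i, Valued.v (y i - x i) < γ) :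
    JselCS α y = JselCS α x ∨
      (mvalCS (α (JselCS α x)) x = 0 ∧ mvalCS (α (JselCS α y)) x = 0) := by
  by_cases h0 : mvalCS (α (JselCS α x)) x = 0
  · right
    refine ⟨h0, ?_⟩
    by_contra hne
    rcases mvalCS_stable (A := α (JselCS α y)) γ hγ hy with ⟨h, -⟩ | h
    · exact hne h
    · -- mvalCS (α Jy) y = mvalCS (α Jy) x ≥ γ, but ≤ mvalCS (α Jx) y < γ
      have h1 : (γ:Γ₀) ≤ mvalCS (α (JselCS α y)) x := by
        rcases mvalCS_achieve (A := α (JselCS α y)) (x := x) with hz | ⟨l, hl, hv⟩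
        · exact absurd hz hne
        · have hxl : x l ≠ 0 := fun hxl => by rw [hxl] at hv; simp at hv; exact hne hv.symm
          rw [← hv]; exact hγ l hxl
      have h2 : mvalCS (α (JselCS α x)) y < γ := by
        rcases mvalCS_stable (A := α (JselCS α x)) γ hγ hy with ⟨-, h'⟩ | h'
        · exact h'
        · rw [h', h0]; exact Units.zero_lt γ
      have := (JselCS_min (α := α) (x := y) (JselCS α x)).trans_lt h2
      rw [h] at this
      exact absurd h1 (not_le.2 this)
  · left
    refine JselCS_congr fun j => ?_
    rcases mvalCS_stable (A := α j) γ hγ hy with ⟨h, -⟩ | h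
    · exact absurd (le_zero_iff.1 ((JselCS_min j).trans h.le)) h0
    · exact h
end jsel

/-- Retraction onto a finite union of coordinate subspaces (affine content of
Proposition 2.11 and Corollary 2.12 of the paper): over a valued field `K`, every nonempty
finite union `C` of coordinate subspaces of `K^n` is a retract of `K^n`. -/
theorem retraction_onto_union_of_coordinate_subspaces
    {K : Type*} [Field K] {Γ₀ : Type*} [LinearOrderedCommGroupWithZero Γ₀]
    [Valued K Γ₀] (n k : ℕ) (α : Fin k → Set (Fin n))
    (C : Set (Fin n → K))
    (hC : C = ⋃ j, {x : Fin n → K | ∀ i ∈ α j, x i = 0})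
    (hne : C.Nonempty) :
    ∃ ω : (Fin n → K) → (Fin n → K),
      Continuous ω ∧ Set.range ω ⊆ C ∧ ∀ x ∈ C, ω x = x := by
  classical
  obtain ⟨x₀, hx₀⟩ := hne
  rw [hC, Set.mem_iUnion] at hx₀
  obtain ⟨j₀, -⟩ := hx₀
  haveI : NeZero k := ⟨fun hk => by subst hk; exact j₀.elim0⟩
  set v := (Valued.v : Valuation K Γ₀)
  refine ⟨fun x i => if i ∈ α (JselCS α x) then 0 else x i, ?_, ?_, ?_⟩
  · -- continuity
    rw [continuous_iff_continuousAt]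
    intro x
    rw [ContinuousAt, tendsto_pi_nhds]
    intro i
    rw [Filter.tendsto_def]
    intro s hs
    rw [Valued.mem_nhds] at hs
    obtain ⟨δ, hδ⟩ := hs
    set δ' : Γ₀ := MonoidWithZeroHom.ValueGroup₀.embedding δ.1 with hδ'
    have hδ'0 : δ' ≠ 0 := fun h => δ.ne_zero
      (MonoidWithZeroHom.ValueGroup₀.embedding_injective (h.trans (map_zero _).symm))
    have hδ'pos : 0 < δ' := zero_lt_iff.2 hδ'0
    -- choose γ ≤ δ and ≤ all nonzero coordinate values
    set T : Finset Γ₀ := insert δ' ((Finset.univ.filter fun l => x l ≠ 0).image fun l => v (x l)) with hT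
    have hTne : T.Nonempty := ⟨δ', mem_insert_self _ _⟩
    have hT0 : T.min' hTne ≠ 0 := by
      have := Finset.min'_mem T hTne
      rcases Finset.mem_insert.1 this with h | h
      · rw [h]; exact hδ'0
      · rcases Finset.mem_image.1 h with ⟨l, hl, hv⟩
        rw [← hv]
        simp only [mem_filter] at hl
        simpa using hl.2
    set γ : Γ₀ˣ := Units.mk0 _ hT0 with hγdef
    have hγδ : (γ:Γ₀) ≤ δ' := Finset.min'_le _ _ (mem_insert_self _ _)
    have hγv : ∀ l, x l ≠ 0 → (γ:Γ₀) ≤ v (x l) := fun l hl =>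
      Finset.min'_le _ _ (Finset.mem_insert_of_mem (Finset.mem_image_of_mem _ (by simp [hl])))
    have hγu : ∃ u : (MonoidWithZeroHom.ValueGroup₀ (MonoidWithZeroHom.ofClass (Valued.v : Valuation K Γ₀)))ˣ,
        MonoidWithZeroHom.ValueGroup₀.embedding u.1 = (γ:Γ₀) := by
      rcases Finset.mem_insert.1 (Finset.min'_mem T hTne) with h | h
      · exact ⟨δ, h.symm⟩
      · rcases Finset.mem_image.1 h with ⟨l, hl, hv⟩
        simp only [mem_filter] at hl
        refine ⟨Units.mk0 ((Valued.v : Valuation K Γ₀).restrict (x l)) ?_, ?_⟩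
        · exact ne_of_gt ((Valuation.restrict_pos_iff (Valued.v : Valuation K Γ₀) (x l)).2 (by simpa [zero_lt_iff] using hl.2))
        · rw [Units.val_mk0, Valuation.embedding_restrict]; exact hv
    -- the eventually-neighborhood
    have hev : ∀ᶠ y in nhds x, ∀ l, v (y l - x l) < γ := by
      rw [Filter.eventually_all]
      intro l
      have hcont : Filter.Tendsto (fun y : Fin n → K => y l) (nhds x) (nhds (x l)) :=
        (continuous_apply l).continuousAt
      exact hcont (show {z : K | Valued.v (z - x l) < (γ:Γ₀)} ∈ nhds (x l) by
        obtain ⟨u, hu⟩ := hγu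
        rw [Valued.mem_nhds]; exact ⟨u, fun y hy => by
          have hy' : (Valued.v : Valuation K Γ₀).restrict (y - x l) < u.1 := hy
          rw [Valuation.restrict_lt_iff_lt_embedding, hu] at hy'; exact hy'⟩)
    refine Filter.mem_of_superset (hev.and (Filter.Eventually.of_forall fun _ => trivial)) ?_
    rintro y ⟨hy, -⟩
    refine hδ ?_
    show (Valued.v : Valuation K Γ₀).restrict _ < δ.1
    rw [Valuation.restrict_lt_iff_lt_embedding]
    change v _ < δ'
    -- now the coordinate estimate
    have key : v ((if i ∈ α (JselCS α y) then 0 else y i) -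
        (if i ∈ α (JselCS α x) then 0 else x i)) < δ' := by
      rcases JselCS_dichotomy (α := α) γ hγv hy with heq | ⟨hz1, hz2⟩
      · rw [heq]
        by_cases hi : i ∈ α (JselCS α x)
        · simp [hi, hδ'pos]
        · simp only [hi, if_neg, if_false]
          exact lt_of_lt_of_le (hy i) hγδ
      · have hx1 : ∀ i ∈ α (JselCS α x), x i = 0 := mvalCS_eq_zero_iff.1 hz1
        have hx2 : ∀ i ∈ α (JselCS α y), x i = 0 := mvalCS_eq_zero_iff.1 hz2
        by_cases hiy : i ∈ α (JselCS α y) <;> by_cases hix : i ∈ α (JselCS α x)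
        · simp [hiy, hix, hδ'pos]
        · simp only [hiy, if_true, hix, if_false]
          rw [zero_sub, Valuation.map_neg]
          have := hx2 i hiy
          rw [this]
          simp [hδ'pos]
        · simp only [hiy, if_false, hix, if_true]
          rw [sub_zero, ← sub_zero (y i), ← hx1 i hix]
          exact lt_of_lt_of_le (hy i) hγδ
        · simp only [hiy, hix, if_false]
          exact lt_of_lt_of_le (hy i) hγδ
    exact key
  · -- range ⊆ C
    rintro _ ⟨x, rfl⟩
    rw [hC, Set.mem_iUnion]
    exact ⟨JselCS α x, fun i hi => by simp [hi]⟩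
  · -- fixes C
    intro x hx
    rw [hC, Set.mem_iUnion] at hx
    obtain ⟨j, hj⟩ := hx
    have hmin : mvalCS (α (JselCS α x)) x = 0 := by
      have h0 : mvalCS (α j) x = 0 := mvalCS_eq_zero_iff.2 hj
      exact le_zero_iff.1 ((JselCS_min j).trans h0.le)
    have hz : ∀ i ∈ α (JselCS α x), x i = 0 := mvalCS_eq_zero_iff.1 hmin
    funext i
    by_cases hi : i ∈ α (JselCS α x)
    · simp [hi, hz i hi]
    · simp [hi]
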